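/- Let v be an x-vertex and u a 0-vertex that are K-adjacent (some K-edge joins v and u), and suppose a(v, I, K, 0) ≤ R. Then for every feasible solution x*, the output values of the local algorithm satisfy x_v + x_u ≥ ω(x*), where x_u = 0. -/

import Mathlib

/-- An undirected multigraph with two-coloured vertices and two-coloured edges.
`isX v` means `v` is an x-vertex (otherwise `v` is a 0-vertex);
`isK e` means `e` is a K-edge (otherwise `e` is an I-edge). -/
structure ColoredMultigraph (V : Type) (E : Type) where
  ends : E → Sym2 V
  isX : V → Prop
  isK : E → Prop

namespace ColoredMultigraph

variable {V E : Type} (G : ColoredMultigraph V E)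

/-- Edge `e` joins vertices `a` and `b`. -/
def Joins (e : E) (a b : V) : Prop := G.ends e = s(a, b)

/-- `AltWalk G v c c' u n` : there is an alternating walk from `v` to `u` whose
first edge has colour `c` (`true` = K-edge, `false` = I-edge), whose last edge
has colour `c'`, and whose K-length (number of K-edges) is `n`. -/
inductive AltWalk : V → Bool → Bool → V → ℕ → Prop
  | single (e : E) (a b : V) (c : Bool) :
      G.Joins e a b → (G.isK e ↔ c = true) → AltWalk a c c b (cond c 1 0)
  | cons (e : E) (a b : V) (c c' : Bool) (u : V) (n : ℕ) :
      G.Joins e a b → (G.isK e ↔ c = true) → AltWalk b (!c) c' u n →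
      AltWalk a c c' u (cond c 1 0 + n)

/-- `a(v,X,Y,0)` : the minimum K-length of a `(v,X,Y,0)`-walk, that is, a walk
from `v` to some 0-vertex starting with an X-edge and ending with a Y-edge
(`∞` if no such walk exists). -/
noncomputable def walkInf (v : V) (X Y : Bool) : ℕ∞ :=
  sInf {n : ℕ∞ | ∃ m : ℕ, n = m ∧ ∃ u, G.AltWalk v X Y u m ∧ ¬ G.isX u}

/-- `A(v,X)` : the maximum K-length of an alternating walk starting at `v` with
an X-edge (`∞` if walks of arbitrarily large K-length exist). -/
noncomputable def walkSup (v : V) (X : Bool) : ℕ∞ :=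
  sSup {n : ℕ∞ | ∃ m : ℕ, n = m ∧ ∃ Y u, G.AltWalk v X Y u m}

/-- `b(v,X,Y,0) = min {a(v,X,Y,0), R}`. -/
noncomputable def bnd (R : ℕ) (v : V) (X Y : Bool) : ℕ∞ :=
  min (G.walkInf v X Y) (R : ℕ∞)

/-- `B(v,X) = min {A(v,X), R}`. -/
noncomputable def Bnd (R : ℕ) (v : V) (X : Bool) : ℕ∞ :=
  min (G.walkSup v X) (R : ℕ∞)

/-- The value `p_v` chosen by the local algorithm:
`p_v = b(v,I,K,0)` if `a(v,K,K,0) ≤ R`, and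
`p_v = min {b(v,I,K,0), B(v,K)}` otherwise. -/
noncomputable def pv (R : ℕ) (v : V) : ℕ∞ :=
  if G.walkInf v true true ≤ (R : ℕ∞) then G.bnd R v false true
  else min (G.bnd R v false true) (G.Bnd R v true)

/-- The value `q_v` chosen by the local algorithm:
`q_v = b(v,K,K,0)` if `a(v,I,K,0) ≤ R`, and
`q_v = min {b(v,K,K,0), B(v,I)}` otherwise. -/
noncomputable def qv (R : ℕ) (v : V) : ℕ∞ :=
  if G.walkInf v false true ≤ (R : ℕ∞) then G.bnd R v true true
  else min (G.bnd R v true true) (G.Bnd R v false)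

open Classical in
/-- The output value of the local algorithm: `p_v / (p_v + q_v)` at an x-vertex
`v`, and `0` at a 0-vertex. -/
noncomputable def xval (R : ℕ) (v : V) : ℝ :=
  if G.isX v then
    ((G.pv R v).toNat : ℝ) / (((G.pv R v).toNat : ℝ) + ((G.qv R v).toNat : ℝ))
  else 0

/-- Structural assumptions: every x-vertex is incident to at least one K-edge
and at least one I-edge, every 0-vertex is incident to exactly one edge, and
every edge has at least one x-vertex endpoint. -/
def WellFormed : Prop :=
  (∀ v, G.isX v → ∃ e, v ∈ G.ends e ∧ G.isK e) ∧
  (∀ v, G.isX v → ∃ e, v ∈ G.ends e ∧ ¬ G.isK e) ∧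
  (∀ v, ¬ G.isX v → ∃! e, v ∈ G.ends e) ∧
  (∀ e a b, G.Joins e a b → G.isX a ∨ G.isX b)

/-- A feasible solution: nonnegative, zero at 0-vertices, and satisfying
`x a + x b ≤ 1` for every I-edge `{a, b}`. -/
def Feasible (x : V → ℝ) : Prop :=
  (∀ a, 0 ≤ x a) ∧ (∀ a, ¬ G.isX a → x a = 0) ∧
  (∀ e a b, G.Joins e a b → ¬ G.isK e → x a + x b ≤ 1)

/-- The utility `ω(x)` of a solution: the minimum (infimum) over K-edges
`{a, b}` of `x a + x b`. -/
noncomputable def utility (x : V → ℝ) : ℝ :=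
  sInf {r : ℝ | ∃ e a b, G.Joins e a b ∧ G.isK e ∧ r = x a + x b}

lemma utility_bddBelow (x : V → ℝ) (hx : G.Feasible x) :
    BddBelow {r : ℝ | ∃ e a b, G.Joins e a b ∧ G.isK e ∧ r = x a + x b} := by
  refine ⟨0, ?_⟩
  rintro r ⟨e, a, b, -, -, rfl⟩
  exact add_nonneg (hx.1 a) (hx.1 b)

lemma utility_le (x : V → ℝ) (hx : G.Feasible x) {e : E} {a b : V}
    (h : G.Joins e a b) (hK : G.isK e) : G.utility x ≤ x a + x b :=
  csInf_le (G.utility_bddBelow x hx) ⟨e, a, b, h, hK, rfl⟩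

lemma AltWalk.one_le_of_startK {v u : V} {c₂ : Bool} {m : ℕ}
    (W : G.AltWalk v true c₂ u m) : 1 ≤ m := by
  cases W <;> simp

lemma AltWalk.one_le_of_endK' {v u : V} {c c₂ : Bool} {m : ℕ}
    (W : G.AltWalk v c c₂ u m) : c₂ = true → 1 ≤ m := by
  induction W with
  | single e a b c h1 h2 => rintro rfl; simp
  | cons e a b c c₂ u n h1 h2 W ih => intro hc; have := ih hc; omega

lemma AltWalk.one_le_of_endK {v u : V} {c : Bool} {m : ℕ}
    (W : G.AltWalk v c true u m) : 1 ≤ m := AltWalk.one_le_of_endK' G W rfl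

/-- Key induction: bounds along an alternating walk ending with a K-edge. -/
lemma AltWalk.bound (x : V → ℝ) (hx : G.Feasible x) {v u : V} {c : Bool} {m : ℕ}
    (W : G.AltWalk v c true u m) :
    if c then (m : ℝ) * G.utility x ≤ x v + x u + (m - 1)
    else (m : ℝ) * G.utility x ≤ (m : ℝ) - x v + x u := by
  suffices h : ∀ {c₂ : Bool}, ∀ _ : G.AltWalk v c c₂ u m, c₂ = true →
      (if c then (m : ℝ) * G.utility x ≤ x v + x u + (m - 1)
       else (m : ℝ) * G.utility x ≤ (m : ℝ) - x v + x u) from h W rfl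
  intro c₂ W
  induction W with
  | single e a b c h1 h2 =>
    rintro rfl
    have hK : G.isK e := h2.mpr rfl
    have := G.utility_le x hx h1 hK
    simp only [cond_true, if_true, Nat.cast_one]
    linarith
  | cons e a b c c₂ w n h1 h2 W ih =>
    rintro rfl
    have ih' := ih W rfl
    cases c with
    | true =>
      have hK : G.isK e := h2.mpr rfl
      have h3 := G.utility_le x hx h1 hK
      simp only [Bool.not_true] at ih'
      rw [if_neg (by simp)] at ih'
      simp only [cond_true, if_true]
      push_cast
      linarith
    | false =>
      have hI : ¬ G.isK e := fun h => by simpa using h2.mp h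
      have h3 := hx.2.2 e a b h1 hI
      simp only [Bool.not_false] at ih'
      rw [if_pos trivial] at ih'
      have hn : 1 ≤ n := AltWalk.one_le_of_endK' G W rfl
      simp only [cond_false, Nat.zero_add]
      rw [if_neg (by simp)]
      push_cast at ih' ⊢
      linarith

end ColoredMultigraph

/-- Let `v` be an x-vertex and `u` a 0-vertex that are
K-adjacent, and suppose `a(v,I,K,0) ≤ R`. Then for every feasible solution
`x*`, the output values of the local algorithm satisfy `x_v + x_u ≥ ω(x*)`,
where `x_u = 0`. -/
theorem stmt_10 {V E : Type} (G : ColoredMultigraph V E) (hG : G.WellFormed)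
    (R : ℕ) (hR : 1 ≤ R) (v u : V) (hv : G.isX v) (hu : ¬ G.isX u)
    (hadj : ∃ e, G.Joins e v u ∧ G.isK e)
    (ha : G.walkInf v false true ≤ (R : ℕ∞))
    (xstar : V → ℝ) (hxstar : G.Feasible xstar) :
    G.xval R u = 0 ∧ G.utility xstar ≤ G.xval R v + G.xval R u := by
  classical
  obtain ⟨e0, he0, hK0⟩ := hadj
  have hxu0 : xstar u = 0 := hxstar.2.1 u hu
  -- the single K-edge walk v - u
  have hwalk1 : G.AltWalk v true true u 1 := by
    have h := ColoredMultigraph.AltWalk.single (G := G) e0 v u true he0 (by simp [hK0])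
    simpa using h
  -- a(v,K,K,0) = 1
  have hKKle : G.walkInf v true true ≤ (1 : ℕ∞) :=
    sInf_le ⟨1, by norm_num, u, hwalk1, hu⟩
  have hKKge : (1 : ℕ∞) ≤ G.walkInf v true true := by
    apply le_sInf
    rintro n ⟨m, rfl, Y, W, -⟩
    exact_mod_cast W.one_le_of_startK
  have h1R : (1 : ℕ∞) ≤ (R : ℕ∞) := by exact_mod_cast hR
  -- q_v = 1
  have hq : G.qv R v = 1 := by
    rw [ColoredMultigraph.qv, if_pos ha, ColoredMultigraph.bnd,
      le_antisymm hKKle hKKge, min_eq_left h1R]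
  -- extract the minimal (v,I,K,0)-walk
  set S : Set ℕ := {m : ℕ | ∃ w, G.AltWalk v false true w m ∧ ¬ G.isX w} with hSdef
  have hSne : S.Nonempty := by
    by_contra hS
    rw [Set.not_nonempty_iff_eq_empty] at hS
    have : G.walkInf v false true = ⊤ := by
      rw [ColoredMultigraph.walkInf]
      refine (congrArg sInf ?_).trans (sInf_empty : sInf (∅ : Set ℕ∞) = ⊤)
      ext n
      simp only [Set.mem_empty_iff_false, iff_false]
      rintro ⟨m, rfl, w, W, hw⟩
      exact absurd (by exact ⟨w, W, hw⟩ : m ∈ S) (by simp [hS])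
    rw [this] at ha
    exact absurd (le_antisymm ha le_top) (by simp)
  set m0 : ℕ := sInf S with hm0def
  obtain ⟨w0, W0, hw0⟩ : m0 ∈ S := Nat.sInf_mem hSne
  have hm0pos : 1 ≤ m0 := W0.one_le_of_endK
  -- a(v,I,K,0) = m0
  have hIK : G.walkInf v false true = (m0 : ℕ∞) := by
    apply le_antisymm
    · exact sInf_le ⟨m0, rfl, w0, W0, hw0⟩
    · apply le_sInf
      rintro n ⟨m, rfl, w, W, hw⟩
      exact_mod_cast Nat.sInf_le (⟨w, W, hw⟩ : m ∈ S)
  -- p_v = m0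
  have hp : G.pv R v = (m0 : ℕ∞) := by
    rw [ColoredMultigraph.pv, if_pos (hKKle.trans h1R), ColoredMultigraph.bnd, hIK,
      min_eq_left (hIK ▸ ha)]
  -- output value at v
  have hxv : G.xval R v = (m0 : ℝ) / ((m0 : ℝ) + 1) := by
    rw [ColoredMultigraph.xval, if_pos hv, hp, hq]
    simp [ENat.toNat_coe]
  have hxuval : G.xval R u = 0 := by rw [ColoredMultigraph.xval, if_neg hu]
  refine ⟨hxuval, ?_⟩
  rw [hxuval, hxv, add_zero]
  -- the key walk bound
  have hbound := ColoredMultigraph.AltWalk.bound G xstar hxstar W0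
  rw [if_neg (by simp), hxstar.2.1 w0 hw0] at hbound
  have hωv : G.utility xstar ≤ xstar v := by
    have := G.utility_le xstar hxstar he0 hK0
    linarith [this, hxu0.le.trans_eq rfl]
  have hm0R : (1 : ℝ) ≤ (m0 : ℝ) := by exact_mod_cast hm0pos
  rw [le_div_iff₀ (by linarith : (0 : ℝ) < (m0 : ℝ) + 1)]
  nlinarith [hxstar.1 v]
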